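/- Let n be a positive integer, A an n×n real matrix, Q a symmetric positive semidefinite n×n real matrix, and X a symmetric positive definite n×n real matrix such that X − A·X·Aᵀ − Q is positive definite. Then there exists a symmetric positive semidefinite n×n matrix Σ such that Σ = A·Σ·Aᵀ + Q and X − Σ is positive definite. -/

import Mathlib

open Matrix Filter

section Aux

variable {n : ℕ} (A Q : Matrix (Fin n) (Fin n) ℝ)

/-- The Lyapunov iteration `S 0 = 0`, `S (k+1) = A * S k * Aᵀ + Q`. -/
private def lyapSeq : ℕ → Matrix (Fin n) (Fin n) ℝ
  | 0 => 0
  | k + 1 => A * lyapSeq k * Aᵀ + Q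

end Aux

private lemma psd_of_symm_of_forms {n : ℕ} {M : Matrix (Fin n) (Fin n) ℝ}
    (h1 : Mᵀ = M) (h2 : ∀ x, 0 ≤ x ⬝ᵥ (M *ᵥ x)) : M.PosSemidef := by
  refine Matrix.posSemidef_iff_dotProduct_mulVec.mpr ⟨?_, fun x => by simpa using h2 x⟩
  rw [Matrix.IsHermitian, Matrix.conjTranspose_eq_transpose_of_trivial, h1]

/-- Steady-state covariance existence claim in the proof of Theorem 1: if the
strict discrete Lyapunov inequality `A X Aᵀ + Q ≺ X` holds with `X ≻ 0`, then
the discrete Lyapunov equation `Sig = ASigAᵀ + Q` has a positive semidefinite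
solution, dominated by `X`. -/
theorem steady_state_covariance_exists
    (n : ℕ) (hn : 0 < n)
    (A Q X : Matrix (Fin n) (Fin n) ℝ)
    (hQ : Q.PosSemidef) (hX : X.PosDef)
    (hLyap : (X - A * X * Aᵀ - Q).PosDef) :
    ∃ Sig : Matrix (Fin n) (Fin n) ℝ,
      Sig.PosSemidef ∧ Sig = A * Sig * Aᵀ + Q ∧ (X - Sig).PosDef := by
  classical
  set S : ℕ → Matrix (Fin n) (Fin n) ℝ := lyapSeq A Q with hSdef
  have hS0 : S 0 = 0 := rfl
  have hSsucc : ∀ k, S (k + 1) = A * S k * Aᵀ + Q := fun k => rfl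
  have hAT : Aᵀ = Aᴴ := (Matrix.conjTranspose_eq_transpose_of_trivial A).symm
  have hQT : Qᵀ = Q := by
    have := hQ.isHermitian
    rwa [Matrix.IsHermitian, Matrix.conjTranspose_eq_transpose_of_trivial] at this
  -- B is the upper bound A X Aᵀ + Q
  set B : Matrix (Fin n) (Fin n) ℝ := A * X * Aᵀ + Q with hBdef
  have hBpsd : B.PosSemidef := by
    rw [hBdef, hAT]
    exact (hX.posSemidef.mul_mul_conjTranspose_same A).add hQ
  have hXB : (X - B).PosDef := by
    have : X - B = X - A * X * Aᵀ - Q := by rw [hBdef]; abel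
    rwa [this]
  -- each iterate is PSD
  have hPSD : ∀ k, (S k).PosSemidef := by
    intro k; induction k with
    | zero => rw [hS0]; exact Matrix.PosSemidef.zero
    | succ k ih =>
      rw [hSsucc, hAT]
      exact (ih.mul_mul_conjTranspose_same A).add hQ
  -- monotone
  have hmono : ∀ k, (S (k + 1) - S k).PosSemidef := by
    intro k; induction k with
    | zero => simpa [hSsucc, hS0] using hQ
    | succ k ih =>
      have heq : S (k + 2) - S (k + 1) = A * (S (k + 1) - S k) * Aᵀ := by
        rw [hSsucc, hSsucc]; noncomm_ring
      rw [heq, hAT]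
      exact ih.mul_mul_conjTranspose_same A
  -- bounded above by B
  have hub : ∀ k, (B - S k).PosSemidef := by
    intro k; induction k with
    | zero => rw [hS0, sub_zero]; exact hBpsd
    | succ k ih =>
      have hXk : (X - S k).PosSemidef := by
        have : X - S k = (X - B) + (B - S k) := by abel
        rw [this]; exact (hXB.add_posSemidef ih).posSemidef
      have heq : B - S (k + 1) = A * (X - S k) * Aᵀ := by
        rw [hSsucc, hBdef]; noncomm_ring
      rw [heq, hAT]
      exact hXk.mul_mul_conjTranspose_same A
  -- quadratic forms
  set q : (Fin n → ℝ) → ℕ → ℝ := fun x k => x ⬝ᵥ (S k *ᵥ x) with hqdef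
  have hq0 : ∀ x k, 0 ≤ q x k := fun x k => by simpa using (hPSD k).dotProduct_mulVec_nonneg x
  have hqmono : ∀ x, Monotone (q x) := by
    intro x
    refine monotone_nat_of_le_succ fun k => ?_
    have := (hmono k).dotProduct_mulVec_nonneg x
    simp only [star_trivial, Matrix.sub_mulVec, dotProduct_sub] at this
    linarith
  have hqbdd : ∀ x, BddAbove (Set.range (q x)) := by
    intro x
    refine ⟨x ⬝ᵥ (B *ᵥ x), ?_⟩
    rintro _ ⟨k, rfl⟩
    have := (hub k).dotProduct_mulVec_nonneg x
    simp only [star_trivial, Matrix.sub_mulVec, dotProduct_sub] at this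
    linarith
  have hqconv : ∀ x, Tendsto (q x) atTop (nhds (⨆ k, q x k)) := fun x =>
    tendsto_atTop_ciSup (hqmono x) (hqbdd x)
  -- symmetry of iterates
  have hsymm : ∀ k, (S k)ᵀ = S k := by
    intro k
    have := (hPSD k).isHermitian
    rwa [Matrix.IsHermitian, Matrix.conjTranspose_eq_transpose_of_trivial] at this
  -- entries via polarization
  have hpol : ∀ k (i j : Fin n), S k i j =
      (q (Pi.single i 1 + Pi.single j 1) k - q (Pi.single i 1) k - q (Pi.single j 1) k) / 2 := by
    intro k i j
    have hji : S k j i = S k i j := by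
      rw [← Matrix.transpose_apply (S k) i j, hsymm]
    simp only [hqdef, Matrix.mulVec_add, dotProduct_add, add_dotProduct,
      Matrix.mulVec_single_one, single_dotProduct, Matrix.col_apply, one_mul, mul_one]
    rw [hji]
    ring_nf
  -- entrywise convergence
  have hEnt : ∀ i j : Fin n, ∃ L, Tendsto (fun k => S k i j) atTop (nhds L) := by
    intro i j
    have h := (((hqconv (Pi.single i 1 + Pi.single j 1)).sub
      (hqconv (Pi.single i 1))).sub (hqconv (Pi.single j 1))).div_const 2
    refine ⟨_, h.congr fun k => ?_⟩
    exact (hpol k i j).symm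
  choose Sig hSig using hEnt
  set Sg : Matrix (Fin n) (Fin n) ℝ := Matrix.of Sig with hSgdef
  have hSconv : Tendsto S atTop (nhds Sg) := by
    refine tendsto_pi_nhds.mpr ?_
    intro i
    rw [tendsto_pi_nhds]
    intro j
    exact hSig i j
  -- continuity of quadratic forms in the matrix
  have hqf : ∀ x : Fin n → ℝ,
      Tendsto (fun k => x ⬝ᵥ (S k *ᵥ x)) atTop (nhds (x ⬝ᵥ (Sg *ᵥ x))) := by
    intro x
    have hc : Continuous fun M : Matrix (Fin n) (Fin n) ℝ => x ⬝ᵥ (M *ᵥ x) :=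
      (continuous_const.dotProduct (continuous_id.matrix_mulVec continuous_const))
    exact (hc.tendsto Sg).comp hSconv
  -- Sg is symmetric
  have hSgsymm : Sgᵀ = Sg := by
    ext i j
    rw [Matrix.transpose_apply]
    exact tendsto_nhds_unique ((hSig j i).congr fun k => by
      rw [← Matrix.transpose_apply (S k) i j, hsymm]) (hSig i j)
  -- Sg is PSD
  have hSgpsd : Sg.PosSemidef := by
    refine psd_of_symm_of_forms hSgsymm fun x => ?_
    exact ge_of_tendsto' (hqf x) fun k => hq0 x k
  -- fixed point
  have hfix : Sg = A * Sg * Aᵀ + Q := by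
    have hFc : Continuous fun M : Matrix (Fin n) (Fin n) ℝ => A * M * Aᵀ + Q :=
      ((continuous_const.matrix_mul continuous_id).matrix_mul continuous_const).add
        continuous_const
    have h1 : Tendsto (fun k => S (k + 1)) atTop (nhds Sg) :=
      hSconv.comp (tendsto_add_atTop_nat 1)
    have h2 : Tendsto (fun k => A * S k * Aᵀ + Q) atTop (nhds (A * Sg * Aᵀ + Q)) :=
      (hFc.tendsto Sg).comp hSconv
    exact tendsto_nhds_unique (h1.congr fun k => hSsucc k) h2
  -- B - Sg is PSD
  have hBSg : (B - Sg).PosSemidef := by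
    refine psd_of_symm_of_forms ?_ fun x => ?_
    · have hBT : Bᵀ = B := by
        have := hBpsd.isHermitian
        rwa [Matrix.IsHermitian, Matrix.conjTranspose_eq_transpose_of_trivial] at this
      rw [Matrix.transpose_sub, hBT, hSgsymm]
    · have hle : x ⬝ᵥ (Sg *ᵥ x) ≤ x ⬝ᵥ (B *ᵥ x) := by
        refine le_of_tendsto (hqf x) (Filter.Eventually.of_forall fun k => ?_)
        have := (hub k).dotProduct_mulVec_nonneg x
        simp only [star_trivial, Matrix.sub_mulVec, dotProduct_sub] at this
        linarith
      simp only [Matrix.sub_mulVec, dotProduct_sub]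
      linarith
  refine ⟨Sg, hSgpsd, hfix, ?_⟩
  have : X - Sg = (X - B) + (B - Sg) := by abel
  rw [this]
  exact hXB.add_posSemidef hBSg
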